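/- For the linear ODE ẏ = -(L ⊗ I_n) y with L the Laplacian of a connected undirected graph on N vertices, the differences y_i(t) - y_j(t) → 0 exponentially as t → ∞, with rate governed by the second-smallest eigenvalue λ_2 > 0 of L: ||y_i(t) - y_j(t)|| ≤ C e^{-λ_2 t} for some constant C depending on y(0). -/

import Mathlib

open Matrix Kronecker Filter

lemma gap_lemma {N : ℕ} (G : SimpleGraph (Fin N)) [DecidableRel G.Adj] (hG : G.Connected)
    (lam2 : ℝ)
    (hmin : ∀ μ ∈ spectrum ℝ (G.lapMatrix ℝ), μ ≠ 0 → lam2 ≤ μ)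
    (x : Fin N → ℝ) (hx : ∑ i, x i = 0) :
    lam2 * ∑ i, x i ^ 2 ≤ x ⬝ᵥ (G.lapMatrix ℝ *ᵥ x) := by
  classical
  have hL : (G.lapMatrix ℝ).IsHermitian := (G.posSemidef_lapMatrix ℝ).1
  set U : Matrix (Fin N) (Fin N) ℝ := (hL.eigenvectorUnitary : Matrix (Fin N) (Fin N) ℝ) with hU
  have hstar : star U = Uᵀ := by
    rw [Matrix.star_eq_conjTranspose, Matrix.conjTranspose_eq_transpose_of_trivial]
  set c : Fin N → ℝ := Uᵀ *ᵥ x with hc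
  have hUU : U * Uᵀ = 1 := by
    have := (Matrix.mem_unitaryGroup_iff).mp hL.eigenvectorUnitary.2
    rwa [hstar] at this
  -- norm preservation
  have h1 : ∑ i, x i ^ 2 = ∑ k, c k ^ 2 := by
    have : c ⬝ᵥ c = x ⬝ᵥ x := by
      rw [hc, Matrix.dotProduct_mulVec, Matrix.vecMul_transpose, Matrix.mulVec_mulVec, hUU,
        Matrix.one_mulVec]
    simpa [dotProduct, sq] using this.symm
  -- quadratic form
  have h2 : x ⬝ᵥ (G.lapMatrix ℝ *ᵥ x) = ∑ k, hL.eigenvalues k * c k ^ 2 := by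
    conv_lhs => rw [hL.spectral_theorem, Unitary.conjStarAlgAut_apply]
    rw [← hU, hstar]
    rw [← Matrix.mulVec_mulVec, ← Matrix.mulVec_mulVec, Matrix.dotProduct_mulVec,
      ← Matrix.mulVec_transpose]
    simp only [← hU, ← hc, dotProduct, Matrix.mulVec_diagonal]
    refine Finset.sum_congr rfl fun k _ => ?_
    simp [sq]; ring
  -- zero eigenvalue implies zero coefficient
  have h3 : ∀ k, hL.eigenvalues k = 0 → c k = 0 := by
    intro k hk
    have hev := hL.mulVec_eigenvectorBasis k
    rw [hk, zero_smul] at hev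
    have hconst : ∀ i j : Fin N, (hL.eigenvectorBasis k) i = (hL.eigenvectorBasis k) j := by
      intro i j
      have := (G.lapMatrix_mulVec_eq_zero_iff_forall_reachable
        (x := fun i => hL.eigenvectorBasis k i)).mp hev
      exact this i j (hG.preconnected i j)
    have hNpos : 0 < N := by
      rcases hG.nonempty with ⟨i⟩
      exact i.pos
    obtain ⟨i0⟩ : Nonempty (Fin N) := ⟨⟨0, hNpos⟩⟩
    have : c k = (hL.eigenvectorBasis k) i0 * ∑ i, x i := by
      rw [hc, Finset.mul_sum]
      simp only [Matrix.mulVec, dotProduct, Matrix.transpose_apply]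
      refine Finset.sum_congr rfl fun i _ => ?_
      have h : U i k = hL.eigenvectorBasis k i0 := by
        simp only [hU, Matrix.IsHermitian.eigenvectorUnitary_apply]
        exact hconst i i0
      exact congrArg (· * x i) h
    rw [this, hx, mul_zero]
  rw [h1, h2, Finset.mul_sum]
  refine Finset.sum_le_sum fun k _ => ?_
  by_cases hk : hL.eigenvalues k = 0
  · rw [hk, h3 k hk]; simp
  · exact mul_le_mul_of_nonneg_right (hmin _ (hL.eigenvalues_mem_spectrum_real k) hk)
      (sq_nonneg _)

lemma kron_mulVec {N n : ℕ} (L : Matrix (Fin N) (Fin N) ℝ) (w : Fin N × Fin n → ℝ)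
    (i : Fin N) (a : Fin n) :
    ((L ⊗ₖ (1 : Matrix (Fin n) (Fin n) ℝ)) *ᵥ w) (i, a) = ∑ j, L i j * w (j, a) := by
  simp [Matrix.mulVec, dotProduct, Fintype.sum_prod_type, Matrix.one_apply,
    mul_ite, ite_mul, mul_assoc]

lemma lap_colsum {N : ℕ} (G : SimpleGraph (Fin N)) [DecidableRel G.Adj] (j : Fin N) :
    ∑ i, G.lapMatrix ℝ i j = 0 := by
  have hrow : ∀ i, ∑ k, G.lapMatrix ℝ i k = 0 := by
    intro i
    have := congrFun (G.lapMatrix_mulVec_const_eq_zero (R := ℝ)) i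
    simpa [Matrix.mulVec, dotProduct] using this
  have hsym : ∀ i k, G.lapMatrix ℝ i k = G.lapMatrix ℝ k i := by
    intro i k
    exact (congrFun (congrFun (G.isSymm_lapMatrix (R := ℝ)) i) k).symm
  calc ∑ i, G.lapMatrix ℝ i j = ∑ i, G.lapMatrix ℝ j i := by
        exact Finset.sum_congr rfl fun i _ => hsym i j
    _ = 0 := hrow j

lemma gap_lemma2 {N : ℕ} (G : SimpleGraph (Fin N)) [DecidableRel G.Adj] (hG : G.Connected)
    (lam2 : ℝ)
    (hmin : ∀ μ ∈ spectrum ℝ (G.lapMatrix ℝ), μ ≠ 0 → lam2 ≤ μ)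
    (x : Fin N → ℝ) :
    lam2 * ((∑ i, x i ^ 2) - (N : ℝ)⁻¹ * (∑ i, x i) ^ 2) ≤ x ⬝ᵥ (G.lapMatrix ℝ *ᵥ x) := by
  have hNpos : 0 < N := by rcases hG.nonempty with ⟨i⟩; exact i.pos
  have hN : (N : ℝ) ≠ 0 := Nat.cast_ne_zero.mpr hNpos.ne'
  set m : ℝ := (N : ℝ)⁻¹ * ∑ i, x i with hm
  set z : Fin N → ℝ := fun i => x i - m with hz
  have hzsum : ∑ i, z i = 0 := by
    simp only [hz, Finset.sum_sub_distrib, Finset.sum_const, Finset.card_univ,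
      Fintype.card_fin, nsmul_eq_mul, hm]
    field_simp
    ring
  have hzsq : ∑ i, z i ^ 2 = (∑ i, x i ^ 2) - (N : ℝ)⁻¹ * (∑ i, x i) ^ 2 := by
    have : ∀ i, z i ^ 2 = x i ^ 2 - 2 * m * x i + m ^ 2 := fun i => by rw [hz]; ring
    rw [Finset.sum_congr rfl fun i _ => this i]
    simp only [Finset.sum_add_distrib, Finset.sum_sub_distrib, Finset.sum_const,
      Finset.card_univ, Fintype.card_fin, nsmul_eq_mul, ← Finset.mul_sum, hm]
    field_simp
    ring
  have hLz : G.lapMatrix ℝ *ᵥ z = G.lapMatrix ℝ *ᵥ x := by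
    have hzx : z = x - m • (fun _ => (1 : ℝ)) := by
      funext i; simp [hz]
    rw [hzx, Matrix.mulVec_sub, Matrix.mulVec_smul, G.lapMatrix_mulVec_const_eq_zero,
      smul_zero, sub_zero]
  have hsumw : ∑ i, (G.lapMatrix ℝ *ᵥ x) i = 0 := by
    simp only [Matrix.mulVec, dotProduct]
    rw [Finset.sum_comm]
    refine Finset.sum_eq_zero fun j _ => ?_
    rw [← Finset.sum_mul, lap_colsum G j, zero_mul]
  have hquad : z ⬝ᵥ (G.lapMatrix ℝ *ᵥ z) = x ⬝ᵥ (G.lapMatrix ℝ *ᵥ x) := by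
    rw [hLz]
    simp only [dotProduct, hz, sub_mul, Finset.sum_sub_distrib, ← Finset.mul_sum,
      hsumw, mul_zero, sub_zero]
  calc lam2 * ((∑ i, x i ^ 2) - (N : ℝ)⁻¹ * (∑ i, x i) ^ 2)
      = lam2 * ∑ i, z i ^ 2 := by rw [hzsq]
    _ ≤ z ⬝ᵥ (G.lapMatrix ℝ *ᵥ z) := gap_lemma G hG lam2 hmin z hzsum
    _ = x ⬝ᵥ (G.lapMatrix ℝ *ᵥ x) := hquad

lemma pair_bound {N : ℕ} (hN : 0 < N) (x : Fin N → ℝ) (i j : Fin N) :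
    (x i - x j) ^ 2 ≤ 2 * N * ((∑ k, x k ^ 2) - (N : ℝ)⁻¹ * (∑ k, x k) ^ 2) := by
  have hNR : (0 : ℝ) < N := by exact_mod_cast hN
  have h1 : (x i - x j) ^ 2 ≤ ∑ i', ∑ j', (x i' - x j') ^ 2 := by
    calc (x i - x j) ^ 2 ≤ ∑ j', (x i - x j') ^ 2 :=
          Finset.single_le_sum (f := fun j' => (x i - x j') ^ 2) (fun _ _ => sq_nonneg _) (Finset.mem_univ j)
      _ ≤ ∑ i', ∑ j', (x i' - x j') ^ 2 :=
          Finset.single_le_sum (f := fun i' => ∑ j', (x i' - x j') ^ 2)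
            (fun _ _ => Finset.sum_nonneg fun _ _ => sq_nonneg _) (Finset.mem_univ i)
  have h2 : ∑ i', ∑ j', (x i' - x j') ^ 2
      = 2 * N * ((∑ k, x k ^ 2) - (N : ℝ)⁻¹ * (∑ k, x k) ^ 2) := by
    have expand : ∀ i' j' : Fin N, (x i' - x j') ^ 2
        = x i' ^ 2 - 2 * x i' * x j' + x j' ^ 2 := fun _ _ => by ring
    simp only [expand, Finset.sum_add_distrib, Finset.sum_sub_distrib, Finset.sum_const,
      Finset.card_univ, Fintype.card_fin, nsmul_eq_mul, ← Finset.mul_sum, ← Finset.sum_mul,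
      mul_assoc]
    field_simp
    ring
  linarith

theorem stmt14 {N n : ℕ} (G : SimpleGraph (Fin N)) [DecidableRel G.Adj]
    (hG : G.Connected) (lam2 : ℝ) (hpos : 0 < lam2)
    (hmem : lam2 ∈ spectrum ℝ (G.lapMatrix ℝ))
    (hmin : ∀ μ ∈ spectrum ℝ (G.lapMatrix ℝ), μ ≠ 0 → lam2 ≤ μ)
    (y : ℝ → Fin N × Fin n → ℝ)
    (hode : ∀ t, HasDerivAt y
      (-((G.lapMatrix ℝ ⊗ₖ (1 : Matrix (Fin n) (Fin n) ℝ)) *ᵥ y t)) t) :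
    ∃ C : ℝ, ∀ i j : Fin N, ∀ t : ℝ, 0 ≤ t →
      Real.sqrt (∑ a : Fin n, (y t (i, a) - y t (j, a)) ^ 2) ≤
        C * Real.exp (-lam2 * t) := by
  classical
  have hNpos : 0 < N := by rcases hG.nonempty with ⟨i⟩; exact i.pos
  have hNR : (0 : ℝ) < N := by exact_mod_cast hNpos
  set v : ℝ → Fin N × Fin n → ℝ :=
    fun t => -((G.lapMatrix ℝ ⊗ₖ (1 : Matrix (Fin n) (Fin n) ℝ)) *ᵥ y t) with hv
  have hcomp : ∀ (p : Fin N × Fin n) (t : ℝ), HasDerivAt (fun s => y s p) (v t p) t :=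
    fun p t => hasDerivAt_pi.mp (hode t) p
  set F : ℝ → ℝ := fun t =>
    (∑ p : Fin N × Fin n, y t p ^ 2) - (N : ℝ)⁻¹ * ∑ a, (∑ i, y t (i, a)) ^ 2 with hF
  set D : ℝ → ℝ := fun t =>
    (∑ p : Fin N × Fin n, 2 * y t p * v t p)
      - (N : ℝ)⁻¹ * ∑ a, 2 * (∑ i, y t (i, a)) * ∑ i, v t (i, a) with hD
  have hFderiv : ∀ t, HasDerivAt F (D t) t := by
    intro t
    refine HasDerivAt.sub ?_ (HasDerivAt.const_mul _ ?_)
    · refine HasDerivAt.fun_sum fun p _ => ?_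
      simpa [mul_assoc, mul_comm, mul_left_comm] using (hcomp p t).fun_pow 2
    · refine HasDerivAt.fun_sum fun a _ => ?_
      have hs : HasDerivAt (fun s => ∑ i, y s (i, a)) (∑ i, v t (i, a)) t :=
        HasDerivAt.fun_sum fun i _ => hcomp (i, a) t
      simpa [mul_assoc, mul_comm, mul_left_comm] using hs.fun_pow 2
  -- sums of v over first component vanish
  have hvsum : ∀ t a, ∑ i, v t (i, a) = 0 := by
    intro t a
    have h1 : ∀ i : Fin N, v t (i, a) = -∑ j, G.lapMatrix ℝ i j * y t (j, a) := by
      intro i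
      simp only [hv, Pi.neg_apply]
      rw [kron_mulVec]
    simp only [h1, Finset.sum_neg_distrib, neg_eq_zero]
    rw [Finset.sum_comm]
    refine Finset.sum_eq_zero fun j _ => ?_
    rw [← Finset.sum_mul, lap_colsum G j, zero_mul]
  -- F as a sum over coordinates
  have hFeq : ∀ t, F t = ∑ a, ((∑ i, y t (i, a) ^ 2) - (N : ℝ)⁻¹ * (∑ i, y t (i, a)) ^ 2) := by
    intro t
    simp only [hF, Finset.sum_sub_distrib, Finset.mul_sum]
    congr 1
    rw [Fintype.sum_prod_type, Finset.sum_comm]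
  -- F is nonnegative
  have hFpos : ∀ t, 0 ≤ F t := by
    intro t
    rw [hFeq t]
    refine Finset.sum_nonneg fun a _ => ?_
    have h := sq_sum_le_card_mul_sum_sq (s := (Finset.univ : Finset (Fin N)))
      (f := fun i => y t (i, a))
    simp only [Finset.card_univ, Fintype.card_fin] at h
    rw [sub_nonneg, inv_mul_le_iff₀ hNR]
    exact h
  -- the key differential inequality
  have hkey : ∀ t, D t ≤ -(2 * lam2) * F t := by
    intro t
    have hDeq : D t = -2 * ∑ a, (fun i => y t (i, a)) ⬝ᵥ (G.lapMatrix ℝ *ᵥ fun i => y t (i, a)) := by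
      simp only [hD]
      have h2 : ∑ a, 2 * (∑ i, y t (i, a)) * ∑ i, v t (i, a) = 0 :=
        Finset.sum_eq_zero fun a _ => by rw [hvsum t a, mul_zero]
      rw [h2, mul_zero, sub_zero]
      have h1 : ∀ (i : Fin N) (a : Fin n), v t (i, a) = -∑ j, G.lapMatrix ℝ i j * y t (j, a) := by
        intro i a
        simp only [hv, Pi.neg_apply]
        rw [kron_mulVec]
      rw [Fintype.sum_prod_type]
      simp only [h1, dotProduct, Matrix.mulVec]
      rw [Finset.sum_comm]
      rw [Finset.mul_sum]
      refine Finset.sum_congr rfl fun a _ => ?_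
      rw [Finset.mul_sum]
      refine Finset.sum_congr rfl fun i _ => ?_
      simp [dotProduct]
      ring
    rw [hDeq, hFeq t]
    have hsum : lam2 * ∑ a, ((∑ i, y t (i, a) ^ 2) - (N : ℝ)⁻¹ * (∑ i, y t (i, a)) ^ 2)
        ≤ ∑ a, (fun i => y t (i, a)) ⬝ᵥ (G.lapMatrix ℝ *ᵥ fun i => y t (i, a)) := by
      rw [Finset.mul_sum]
      exact Finset.sum_le_sum fun a _ => gap_lemma2 G hG lam2 hmin _
    nlinarith [hsum]
  -- Gronwall
  have hgderiv : ∀ t, HasDerivAt (fun s => F s * Real.exp (2 * lam2 * s))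
      (D t * Real.exp (2 * lam2 * t) + F t * (Real.exp (2 * lam2 * t) * (2 * lam2))) t := by
    intro t
    have h := (hFderiv t).fun_mul (HasDerivAt.exp ((hasDerivAt_id t).const_mul (2 * lam2)))
    simpa using h
  have hganti : Antitone (fun s => F s * Real.exp (2 * lam2 * s)) := by
    refine antitone_of_deriv_nonpos (fun t => (hgderiv t).differentiableAt) fun t => ?_
    rw [(hgderiv t).deriv]
    nlinarith [hkey t, Real.exp_pos (2 * lam2 * t), hFpos t]
  have hFle : ∀ t, 0 ≤ t → F t ≤ F 0 * Real.exp (-(2 * lam2) * t) := by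
    intro t ht
    have h1 : F t * Real.exp (2 * lam2 * t) ≤ F 0 * Real.exp (2 * lam2 * 0) := hganti ht
    rw [mul_zero, Real.exp_zero, mul_one] at h1
    have h2 : F t = F t * Real.exp (2 * lam2 * t) * Real.exp (-(2 * lam2) * t) := by
      rw [mul_assoc, ← Real.exp_add, show 2 * lam2 * t + -(2 * lam2) * t = 0 by ring,
        Real.exp_zero, mul_one]
    rw [h2]
    exact mul_le_mul_of_nonneg_right h1 (Real.exp_nonneg _)
  -- conclusion
  refine ⟨Real.sqrt (2 * N * F 0), fun i j t ht => ?_⟩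
  have hF0 : 0 ≤ F 0 := hFpos 0
  have hbound : ∑ a, (y t (i, a) - y t (j, a)) ^ 2 ≤ 2 * N * F t := by
    rw [hFeq t, Finset.mul_sum]
    exact Finset.sum_le_sum fun a _ => pair_bound hNpos (fun i => y t (i, a)) i j
  have h3 : (2 : ℝ) * N * F t ≤ (2 * N * F 0) * Real.exp (-(2 * lam2) * t) := by
    calc (2 : ℝ) * N * F t ≤ 2 * N * (F 0 * Real.exp (-(2 * lam2) * t)) :=
          mul_le_mul_of_nonneg_left (hFle t ht) (by positivity)
      _ = (2 * N * F 0) * Real.exp (-(2 * lam2) * t) := by ring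
  have h4 : (2 * (N : ℝ) * F 0) * Real.exp (-(2 * lam2) * t)
      = (2 * N * F 0) * (Real.exp (-lam2 * t)) ^ 2 := by
    rw [sq, ← Real.exp_add]
    congr 1
    congr 1
    ring
  calc Real.sqrt (∑ a : Fin n, (y t (i, a) - y t (j, a)) ^ 2)
      ≤ Real.sqrt ((2 * N * F 0) * (Real.exp (-lam2 * t)) ^ 2) :=
        Real.sqrt_le_sqrt (by rw [← h4]; linarith)
    _ = Real.sqrt (2 * N * F 0) * Real.exp (-lam2 * t) := by
        rw [Real.sqrt_mul (by positivity), Real.sqrt_sq (Real.exp_nonneg _)]
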